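/- Let E be a real inner product space, β > 0, K ≥ 1, and let n range over {1,…,N} with weights ξ_n ≥ 0, Σ_n ξ_n = 1. Let F, F_n : E → ℝ be differentiable with ∇F_n Lipschitz with constant L_n > 0, ∇F(x) = Σ_n ξ_n ∇F_n(x) for all x, and ∇F Lipschitz with constant L > 0. Given a global model w̃^t, define local trajectories w̃_n^{0,t} = w̃^t, w̃_n^{k+1,t} = w̃_n^{k,t} − β ∇F_n(w̃_n^{k,t}), and the global update w̃^{t+1} = w̃^t − β Σ_n ξ_n Σ_{k=0}^{K−1} ∇F_n(w̃_n^{k,t}). Then F(w̃^{t+1}) − F(w̃^t) ≤ (L β² N K / 2) Σ_n Σ_{k=0}^{K−1} ξ_n² ‖∇F_n(w̃_n^{k,t})‖² − (K β / 2) ‖∇F(w̃^t)‖² + (N β³ / 2) Σ_n Σ_{k=0}^{K−1} ξ_n² L_n² k Σ_{j=0}^{k−1} ‖∇F_n(w̃_n^{j,t})‖². (This is the deterministic per-round descent inequality (70) in Appendix E of the paper.) -/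

import Mathlib

open Finset

/-- Squared norm of a finite sum is at most card times the sum of squared norms. -/
lemma sq_norm_sum_le_card_mul {E : Type*} [NormedAddCommGroup E] {ι : Type*}
    (s : Finset ι) (v : ι → E) :
    ‖∑ i ∈ s, v i‖ ^ 2 ≤ (s.card : ℝ) * ∑ i ∈ s, ‖v i‖ ^ 2 := by
  calc ‖∑ i ∈ s, v i‖ ^ 2 ≤ (∑ i ∈ s, ‖v i‖) ^ 2 :=
        pow_le_pow_left₀ (norm_nonneg _) (norm_sum_le s v) 2
    _ ≤ (s.card : ℝ) * ∑ i ∈ s, ‖v i‖ ^ 2 := by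
        exact_mod_cast sq_sum_le_card_mul_sum_sq (f := fun i => ‖v i‖) (s := s)

/-- Descent lemma for L-smooth functions. -/
lemma smooth_descent {E : Type*} [NormedAddCommGroup E] [InnerProductSpace ℝ E]
    [CompleteSpace E] (F : E → ℝ) (hF : Differentiable ℝ F) (L : ℝ) (hL : 0 ≤ L)
    (hLip : ∀ x y, ‖gradient F x - gradient F y‖ ≤ L * ‖x - y‖) (x v : E) :
    F (x + v) ≤ F x + (inner ℝ (gradient F x) v : ℝ) + L / 2 * ‖v‖ ^ 2 := by
  have hcont : Continuous (gradient F) := by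
    have : LipschitzWith ⟨L, hL⟩ (gradient F) := by
      apply LipschitzWith.of_dist_le_mul
      intro a b
      rw [dist_eq_norm, dist_eq_norm]; exact hLip a b
    exact this.continuous
  set g' : ℝ → ℝ := fun t => (inner ℝ (gradient F (x + t • v)) v : ℝ) with hg'
  have hderiv : ∀ t : ℝ, HasDerivAt (fun t : ℝ => F (x + t • v)) (g' t) t := by
    intro t
    have h1 : HasDerivAt (fun t : ℝ => x + t • v) v t := by
      simpa using ((hasDerivAt_id t).smul_const v).const_add x
    have h2 := ((hF (x + t • v)).hasGradientAt.hasFDerivAt).comp_hasDerivAt t h1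
    simpa only [Function.comp_def, InnerProductSpace.toDual_apply_apply] using h2
  have hg'cont : Continuous g' := by
    apply Continuous.inner
    · exact hcont.comp (continuous_const.add (continuous_id.smul continuous_const))
    · exact continuous_const
  have hint : F (x + v) - F x = ∫ t in (0:ℝ)..1, g' t := by
    have := intervalIntegral.integral_eq_sub_of_hasDerivAt
      (f := fun t : ℝ => F (x + t • v)) (f' := g')
      (fun t _ => hderiv t) (hg'cont.intervalIntegrable 0 1)
    simpa using this.symm
  have hmono : (∫ t in (0:ℝ)..1, g' t) ≤
      ∫ t in (0:ℝ)..1, ((inner ℝ (gradient F x) v : ℝ) + L * t * ‖v‖ ^ 2) := by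
    apply intervalIntegral.integral_mono_on (by norm_num)
      (hg'cont.intervalIntegrable 0 1)
    · exact (Continuous.intervalIntegrable (by continuity) 0 1)
    · intro t ht
      rcases ht with ⟨ht0, ht1⟩
      have h1 : g' t - (inner ℝ (gradient F x) v : ℝ)
          = (inner ℝ (gradient F (x + t • v) - gradient F x) v : ℝ) := by
        simp [hg', inner_sub_left]
      have h2 : (inner ℝ (gradient F (x + t • v) - gradient F x) v : ℝ)
          ≤ ‖gradient F (x + t • v) - gradient F x‖ * ‖v‖ := real_inner_le_norm _ _
      have h3 : ‖gradient F (x + t • v) - gradient F x‖ ≤ L * (t * ‖v‖) := by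
        have := hLip (x + t • v) x
        simpa [norm_smul, abs_of_nonneg ht0] using this
      nlinarith [norm_nonneg v, mul_le_mul_of_nonneg_right h3 (norm_nonneg v)]
  have hval : (∫ t in (0:ℝ)..1, ((inner ℝ (gradient F x) v : ℝ) + L * t * ‖v‖ ^ 2))
      = (inner ℝ (gradient F x) v : ℝ) + L / 2 * ‖v‖ ^ 2 := by
    have h1 : (∫ t in (0:ℝ)..1, L * t * ‖v‖ ^ 2)
        = L / 2 * ‖v‖ ^ 2 := by
      have : (fun t : ℝ => L * t * ‖v‖ ^ 2) = fun t : ℝ => (L * ‖v‖ ^ 2) * t := by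
        funext t; ring
      rw [this, intervalIntegral.integral_const_mul, integral_id]
      ring
    rw [intervalIntegral.integral_add (intervalIntegrable_const)
      (Continuous.intervalIntegrable (by continuity) 0 1), h1]
    simp
  linarith [hint ▸ (hmono.trans_eq hval)]

/-- Deterministic per-round descent inequality (70) in Appendix E. -/
theorem per_round_descent_inequality
    {E : Type*} [NormedAddCommGroup E] [InnerProductSpace ℝ E] [CompleteSpace E]
    (β : ℝ) (hβ : 0 < β) (K : ℕ) (hK : 1 ≤ K)
    (N : ℕ) (ξ : Fin N → ℝ) (hξ : ∀ n, 0 ≤ ξ n) (hξsum : ∑ n, ξ n = 1)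
    (Ln : Fin N → ℝ) (hLn : ∀ n, 0 < Ln n) (L : ℝ) (hL : 0 < L)
    (F : E → ℝ) (Fn : Fin N → E → ℝ)
    (hF : Differentiable ℝ F) (hFn : ∀ n, Differentiable ℝ (Fn n))
    (hLipn : ∀ n x y, ‖gradient (Fn n) x - gradient (Fn n) y‖ ≤ Ln n * ‖x - y‖)
    (hgrad : ∀ x, gradient F x = ∑ n, ξ n • gradient (Fn n) x)
    (hLip : ∀ x y, ‖gradient F x - gradient F y‖ ≤ L * ‖x - y‖)
    (wtil wnext : E) (w : Fin N → ℕ → E)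
    (hw0 : ∀ n, w n 0 = wtil)
    (hw : ∀ n k, w n (k + 1) = w n k - β • gradient (Fn n) (w n k))
    (hnext : wnext = wtil - β • ∑ n, ξ n • ∑ k ∈ Finset.range K, gradient (Fn n) (w n k)) :
    F wnext - F wtil ≤
      (L * β ^ 2 * N * K / 2) *
          (∑ n, ∑ k ∈ Finset.range K, (ξ n) ^ 2 * ‖gradient (Fn n) (w n k)‖ ^ 2)
        - (K * β / 2) * ‖gradient F wtil‖ ^ 2
        + (N * β ^ 3 / 2) *
          (∑ n, ∑ k ∈ Finset.range K, (ξ n) ^ 2 * (Ln n) ^ 2 * (k : ℝ) *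
            ∑ j ∈ Finset.range k, ‖gradient (Fn n) (w n j)‖ ^ 2) := by
  set g : Fin N → ℕ → E := fun n k => gradient (Fn n) (w n k) with hg
  set a : E := gradient F wtil with ha
  set b : ℕ → E := fun k => ∑ n, ξ n • g n k with hb
  set D : E := ∑ n, ξ n • ∑ k ∈ Finset.range K, g n k with hD
  set S1 : ℝ := ∑ n, ∑ k ∈ Finset.range K, (ξ n) ^ 2 * ‖g n k‖ ^ 2 with hS1
  set S3 : ℝ := ∑ n, ∑ k ∈ Finset.range K, (ξ n) ^ 2 * (Ln n) ^ 2 * (k : ℝ) *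
      ∑ j ∈ Finset.range k, ‖g n j‖ ^ 2 with hS3
  -- trajectory formula
  have hwk : ∀ n k, w n 0 - w n k = β • ∑ j ∈ Finset.range k, g n j := by
    intro n k
    induction k with
    | zero => simp
    | succ k ih =>
      rw [Finset.sum_range_succ, smul_add, ← ih, hw n k]
      abel
  -- D as sum over k of b k
  have hDb : D = ∑ k ∈ Finset.range K, b k := by
    rw [hD, hb]
    simp_rw [Finset.smul_sum]
    rw [Finset.sum_comm]
  -- a as weighted sum at step 0
  have ha0 : a = b 0 := by
    rw [ha, hb, hgrad wtil]
    congr 1; funext n; rw [hg]; simp [hw0 n]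
  -- bound on ‖D‖²
  have hDbound : ‖D‖ ^ 2 ≤ (N : ℝ) * K * S1 := by
    have hDp : D = ∑ p ∈ Finset.univ ×ˢ Finset.range K, ξ p.1 • g p.1 p.2 := by
      rw [Finset.sum_product, hD]
      simp [Finset.smul_sum]
    calc ‖D‖ ^ 2 ≤ ((Finset.univ ×ˢ Finset.range K).card : ℝ) *
          ∑ p ∈ Finset.univ ×ˢ Finset.range K, ‖ξ p.1 • g p.1 p.2‖ ^ 2 := by
          rw [hDp]; exact sq_norm_sum_le_card_mul _ _
      _ = (N : ℝ) * K * S1 := by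
          rw [Finset.card_product, Finset.card_univ, Finset.card_range, hS1]
          rw [Finset.sum_product]
          simp [norm_smul, mul_pow, sq_abs, Fintype.card_fin]
  -- bound on ‖a - b k‖²
  have habk : ∀ k, ‖a - b k‖ ^ 2 ≤
      (N : ℝ) * β ^ 2 * ∑ n, (ξ n) ^ 2 * (Ln n) ^ 2 * (k : ℝ) *
        ∑ j ∈ Finset.range k, ‖g n j‖ ^ 2 := by
    intro k
    have hdiff : a - b k = ∑ n, ξ n • (g n 0 - g n k) := by
      rw [ha0, hb, ← Finset.sum_sub_distrib]
      congr 1; funext n; rw [smul_sub]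
    have hterm : ∀ n : Fin N, ‖ξ n • (g n 0 - g n k)‖ ^ 2 ≤
        (ξ n) ^ 2 * ((Ln n) ^ 2 * (β ^ 2 * ((k : ℝ) *
          ∑ j ∈ Finset.range k, ‖g n j‖ ^ 2))) := by
      intro n
      have h1 : ‖g n 0 - g n k‖ ≤ Ln n * ‖w n 0 - w n k‖ := hLipn n _ _
      have h2 : ‖w n 0 - w n k‖ ^ 2 ≤ β ^ 2 * ((k : ℝ) *
          ∑ j ∈ Finset.range k, ‖g n j‖ ^ 2) := by
        rw [hwk n k, norm_smul]
        have := sq_norm_sum_le_card_mul (Finset.range k) (fun j => g n j)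
        rw [Finset.card_range] at this
        calc (|β| * ‖∑ j ∈ Finset.range k, g n j‖) ^ 2
            = β ^ 2 * ‖∑ j ∈ Finset.range k, g n j‖ ^ 2 := by
              rw [mul_pow, sq_abs]
          _ ≤ β ^ 2 * ((k : ℝ) * ∑ j ∈ Finset.range k, ‖g n j‖ ^ 2) := by
              exact mul_le_mul_of_nonneg_left this (sq_nonneg β)
      have h3 : ‖g n 0 - g n k‖ ^ 2 ≤ (Ln n) ^ 2 * ‖w n 0 - w n k‖ ^ 2 := by
        calc ‖g n 0 - g n k‖ ^ 2 ≤ (Ln n * ‖w n 0 - w n k‖) ^ 2 :=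
              pow_le_pow_left₀ (norm_nonneg _) h1 2
          _ = (Ln n) ^ 2 * ‖w n 0 - w n k‖ ^ 2 := by ring
      rw [norm_smul, mul_pow, Real.norm_eq_abs, sq_abs]
      have h4 : (Ln n) ^ 2 * ‖w n 0 - w n k‖ ^ 2 ≤
          (Ln n) ^ 2 * (β ^ 2 * ((k : ℝ) * ∑ j ∈ Finset.range k, ‖g n j‖ ^ 2)) :=
        mul_le_mul_of_nonneg_left h2 (sq_nonneg _)
      exact mul_le_mul_of_nonneg_left (h3.trans h4) (sq_nonneg _)
    calc ‖a - b k‖ ^ 2 ≤ (N : ℝ) * ∑ n, ‖ξ n • (g n 0 - g n k)‖ ^ 2 := by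
          rw [hdiff]
          have := sq_norm_sum_le_card_mul (Finset.univ : Finset (Fin N))
            (fun n => ξ n • (g n 0 - g n k))
          simpa [Finset.card_univ] using this
      _ ≤ (N : ℝ) * β ^ 2 * ∑ n, (ξ n) ^ 2 * (Ln n) ^ 2 * (k : ℝ) *
            ∑ j ∈ Finset.range k, ‖g n j‖ ^ 2 := by
          rw [mul_assoc]
          apply mul_le_mul_of_nonneg_left _ (Nat.cast_nonneg N)
          rw [Finset.mul_sum]
          apply Finset.sum_le_sum
          intro n _
          calc ‖ξ n • (g n 0 - g n k)‖ ^ 2 ≤ _ := hterm n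
            _ = β ^ 2 * ((ξ n) ^ 2 * (Ln n) ^ 2 * (k : ℝ) *
                ∑ j ∈ Finset.range k, ‖g n j‖ ^ 2) := by ring
  -- descent lemma
  have hdesc : F wnext - F wtil ≤ (inner ℝ a (-(β • D)) : ℝ) + L / 2 * ‖β • D‖ ^ 2 := by
    have h := smooth_descent F hF L hL.le hLip wtil (-(β • D))
    have hwn : wnext = wtil + -(β • D) := by rw [hnext]; abel
    rw [← hwn, norm_neg] at h
    rw [ha]
    linarith
  -- inner product expansion
  have hinner : (inner ℝ a (-(β • D)) : ℝ) =
      ∑ k ∈ Finset.range K, (-β) * (inner ℝ a (b k) : ℝ) := by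
    rw [hDb, inner_neg_right, inner_smul_right, inner_sum, Finset.mul_sum]
    simp [mul_comm]
  have hkbound : ∀ k ∈ Finset.range K, (-β) * (inner ℝ a (b k) : ℝ) ≤
      -(β / 2) * ‖a‖ ^ 2 + (β / 2) * ‖a - b k‖ ^ 2 := by
    intro k _
    have h := norm_sub_sq_real a (b k)
    nlinarith [norm_nonneg (b k), sq_nonneg ‖b k‖, hβ.le,
      mul_nonneg hβ.le (sq_nonneg ‖b k‖)]
  have hsum1 : ∑ k ∈ Finset.range K, ((-(β / 2)) * ‖a‖ ^ 2 + (β / 2) * ‖a - b k‖ ^ 2)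
      ≤ -(K * β / 2) * ‖a‖ ^ 2 + (N : ℝ) * β ^ 3 / 2 * S3 := by
    rw [Finset.sum_add_distrib, Finset.sum_const, Finset.card_range]
    have h2 : ∑ k ∈ Finset.range K, (β / 2) * ‖a - b k‖ ^ 2 ≤
        (N : ℝ) * β ^ 3 / 2 * S3 := by
      calc ∑ k ∈ Finset.range K, (β / 2) * ‖a - b k‖ ^ 2
          ≤ ∑ k ∈ Finset.range K, (β / 2) * ((N : ℝ) * β ^ 2 *
              ∑ n, (ξ n) ^ 2 * (Ln n) ^ 2 * (k : ℝ) *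
                ∑ j ∈ Finset.range k, ‖g n j‖ ^ 2) := by
            apply Finset.sum_le_sum
            intro k _
            exact mul_le_mul_of_nonneg_left (habk k) (by linarith)
        _ = (N : ℝ) * β ^ 3 / 2 * S3 := by
            rw [hS3, Finset.sum_comm, Finset.mul_sum]
            exact Finset.sum_congr rfl fun k _ => by ring
    rw [nsmul_eq_mul]
    push_cast
    linarith [h2]
  have hDterm : L / 2 * ‖β • D‖ ^ 2 ≤ L * β ^ 2 * N * K / 2 * S1 := by
    rw [norm_smul, mul_pow, Real.norm_eq_abs, sq_abs]
    calc L / 2 * (β ^ 2 * ‖D‖ ^ 2) ≤ L / 2 * (β ^ 2 * ((N : ℝ) * K * S1)) := by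
          apply mul_le_mul_of_nonneg_left _ (by linarith)
          exact mul_le_mul_of_nonneg_left hDbound (sq_nonneg β)
      _ = L * β ^ 2 * N * K / 2 * S1 := by ring
  have hfinal : F wnext - F wtil ≤
      L * β ^ 2 * N * K / 2 * S1 - K * β / 2 * ‖a‖ ^ 2 + (N : ℝ) * β ^ 3 / 2 * S3 := by
    calc F wnext - F wtil ≤ (inner ℝ a (-(β • D)) : ℝ) + L / 2 * ‖β • D‖ ^ 2 := hdesc
      _ = ∑ k ∈ Finset.range K, (-β) * (inner ℝ a (b k) : ℝ) + L / 2 * ‖β • D‖ ^ 2 := by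
          rw [hinner]
      _ ≤ ∑ k ∈ Finset.range K, ((-(β / 2)) * ‖a‖ ^ 2 + (β / 2) * ‖a - b k‖ ^ 2)
            + L / 2 * ‖β • D‖ ^ 2 := by
          gcongr with k hk
          exact hkbound k hk
      _ ≤ -(K * β / 2) * ‖a‖ ^ 2 + (N : ℝ) * β ^ 3 / 2 * S3
            + L * β ^ 2 * N * K / 2 * S1 := by linarith [hsum1, hDterm]
      _ = L * β ^ 2 * N * K / 2 * S1 - K * β / 2 * ‖a‖ ^ 2
            + (N : ℝ) * β ^ 3 / 2 * S3 := by ring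
  exact hfinal
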